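/- Let K = F₂(a,b) be the field of rational functions in two indeterminates a, b over F₂, and let F := Σ_{m≥0} s_m z^m ∈ K[[z]] be the power series of the period-doubling sequence, i.e. s_m = a if ν₂(m+1) is even and s_m = b if ν₂(m+1) is odd. Then (z³ + z)·F² + ((a+b)z² + (a+b))·F + ((a² + ab + b²)z + a² + ab) = 0 in K[[z]]; in particular F is algebraic of degree 2 over K(z). -/

import Mathlib

open PowerSeries

section PDSAux

variable {R : Type*} [CommRing R] [CharP R 2]


/-- The period-doubling sequence with values `a`, `b`. -/
def pds (a b : R) (m : ℕ) : R :=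
  if Even (padicValNat 2 (m + 1)) then a else b

lemma pds_even (a b : R) (k : ℕ) : pds a b (2 * k) = a := by
  have h : padicValNat 2 (2 * k + 1) = 0 :=
    padicValNat.eq_zero_of_not_dvd (by omega)
  simp [pds, h]

lemma pds_odd (a b : R) (k : ℕ) : pds a b (2 * k + 1) = a + b + pds a b k := by
  have h2 : (2 : R) = 0 := CharTwo.two_eq_zero
  have h : padicValNat 2 (2 * k + 1 + 1) = padicValNat 2 (k + 1) + 1 := by
    have e : 2 * k + 1 + 1 = 2 * (k + 1) := by ring
    rw [e, padicValNat.mul (by norm_num) (by omega)]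
    have hs : padicValNat 2 2 = 1 := padicValNat.self (by norm_num)
    omega
  by_cases he : Even (padicValNat 2 (k + 1))
  · have ho : ¬ Even (padicValNat 2 (2 * k + 1 + 1)) := by
      rw [h, Nat.even_add_one]; simpa using he
    simp only [pds, if_pos he, if_neg ho]
    linear_combination (-a) * h2
  · have ho : Even (padicValNat 2 (2 * k + 1 + 1)) := by
      rw [h, Nat.even_add_one]; simpa using he
    simp only [pds, if_neg he, if_pos ho]
    linear_combination (-b) * h2

lemma pds_sq (a b : R) (m : ℕ) :
    pds a b m ^ 2 = (a + b) * pds a b m + a * b := by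
  have h2 : (2 : R) = 0 := CharTwo.two_eq_zero
  unfold pds
  split_ifs
  · linear_combination (-(a * b)) * h2
  · linear_combination (-(a * b)) * h2

lemma pds_congr (a b : R) {m m' : ℕ}
    (h : padicValNat 2 (m + 1) = padicValNat 2 (m' + 1)) :
    pds a b m = pds a b m' := by
  simp [pds, h]

lemma coeff_sq (f : R⟦X⟧) (n : ℕ) :
    (coeff n) (f ^ 2) = if Even n then (coeff (n / 2) f) ^ 2 else 0 := by
  rw [sq, PowerSeries.coeff_mul]
  by_cases hn : Even n
  · obtain ⟨k, hk⟩ := hn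
    have hmem : ((k, k) : ℕ × ℕ) ∈ Finset.HasAntidiagonal.antidiagonal n := by
      rw [Finset.HasAntidiagonal.mem_antidiagonal]; omega
    rw [← Finset.add_sum_erase _ _ hmem]
    have hz : ∑ p ∈ (Finset.HasAntidiagonal.antidiagonal n).erase (k, k),
        coeff p.1 f * coeff p.2 f = 0 := by
      refine Finset.sum_involution (fun p _ => (p.2, p.1)) ?_ ?_ ?_ ?_
      · intro p _
        dsimp only
        rw [mul_comm]
        exact CharTwo.add_self_eq_zero _
      · intro p hp _
        intro hcontra
        have h1 : p.2 = p.1 := congrArg Prod.fst hcontra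
        have hp' := Finset.mem_erase.mp hp
        apply hp'.1
        have hsum := Finset.HasAntidiagonal.mem_antidiagonal.mp hp'.2
        have e1 : p.1 = k := by omega
        have e2 : p.2 = k := by omega
        exact Prod.ext e1 e2
      · intro p hp
        have hp' := Finset.mem_erase.mp hp
        refine Finset.mem_erase.mpr ⟨?_, ?_⟩
        · intro hcontra
          apply hp'.1
          have h1 : p.2 = k := congrArg Prod.fst hcontra
          have h2 : p.1 = k := congrArg Prod.snd hcontra
          exact Prod.ext h2 h1
        · rw [Finset.HasAntidiagonal.mem_antidiagonal] at hp' ⊢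
          omega
      · intro p hp; rfl
    rw [hz, add_zero, if_pos ⟨k, hk⟩]
    have hdiv : n / 2 = k := by omega
    rw [hdiv, sq]
  · rw [if_neg hn]
    refine Finset.sum_involution (fun p _ => (p.2, p.1)) ?_ ?_ ?_ ?_
    · intro p _
      dsimp only
      rw [mul_comm]
      exact CharTwo.add_self_eq_zero _
    · intro p hp _
      intro hcontra
      have h1 : p.2 = p.1 := congrArg Prod.fst hcontra
      have hsum := Finset.HasAntidiagonal.mem_antidiagonal.mp hp
      exact hn ⟨p.1, by omega⟩
    · intro p hp
      rw [Finset.HasAntidiagonal.mem_antidiagonal] at hp ⊢; omega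
    · intro p hp; rfl


lemma key_eq (a b : R) :
    (X ^ 3 + X) * (PowerSeries.mk (pds a b)) ^ 2 +
      (C (a + b) * X ^ 2 + C (a + b)) * (PowerSeries.mk (pds a b)) +
      (C (a ^ 2 + a * b + b ^ 2) * X + C (a ^ 2 + a * b)) = 0 := by
  have h2 : (2 : R) = 0 := CharTwo.two_eq_zero
  have expand : (X ^ 3 + X) * (PowerSeries.mk (pds a b)) ^ 2 +
      (C (a + b) * X ^ 2 + C (a + b)) * (PowerSeries.mk (pds a b)) +
      (C (a ^ 2 + a * b + b ^ 2) * X + C (a ^ 2 + a * b)) =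
      (PowerSeries.mk (pds a b)) ^ 2 * X ^ 3 + (PowerSeries.mk (pds a b)) ^ 2 * X ^ 1 +
        (C (a + b) * ((PowerSeries.mk (pds a b)) * X ^ 2) + C (a + b) * (PowerSeries.mk (pds a b))) +
        (C (a ^ 2 + a * b + b ^ 2) * X + C (a ^ 2 + a * b)) := by ring
  rw [expand]
  generalize hc2 : a ^ 2 + a * b + b ^ 2 = c2
  generalize hc3 : a ^ 2 + a * b = c3
  generalize hc1 : a + b = c1
  ext n
  simp only [map_add, PowerSeries.coeff_mul_X_pow', PowerSeries.coeff_C_mul, coeff_sq,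
    PowerSeries.coeff_mk, PowerSeries.coeff_X, PowerSeries.coeff_C, map_zero, mul_ite,
    mul_one, mul_zero]
  rcases Nat.even_or_odd' n with ⟨k, hk | hk⟩ <;> subst hk
  · -- n = 2k
    have t1 : (if 3 ≤ 2 * k then (if Even (2 * k - 3) then pds a b ((2 * k - 3) / 2) ^ 2 else 0) else 0)
        = 0 := by
      split_ifs with h h'
      · exfalso; rw [Nat.even_iff] at h'; omega
      · rfl
      · rfl
    have t2 : (if 1 ≤ 2 * k then (if Even (2 * k - 1) then pds a b ((2 * k - 1) / 2) ^ 2 else 0) else 0)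
        = 0 := by
      split_ifs with h h'
      · exfalso; rw [Nat.even_iff] at h'; omega
      · rfl
      · rfl
    rw [t1, t2]
    rcases Nat.eq_zero_or_pos k with rfl | hk
    · rw [if_neg (by omega : ¬ (2 ≤ 2 * 0)), if_neg (by omega : ¬ (2 * 0 = 1)),
        if_pos (by omega : 2 * 0 = 0), pds_even a b 0]
      subst hc1 hc2 hc3
      linear_combination (a ^ 2 + a * b) * h2
    · rw [if_pos (by omega : 2 ≤ 2 * k), if_neg (by omega : ¬ 2 * k = 1),
        if_neg (by omega : ¬ 2 * k = 0)]
      have e1 : 2 * k - 2 = 2 * (k - 1) := by omega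
      rw [e1, pds_even a b (k - 1), pds_even a b k]
      subst hc1 hc2 hc3
      linear_combination (a ^ 2 + a * b) * h2
  · -- n = 2k + 1
    rw [if_pos (by omega : 1 ≤ 2 * k + 1)]
    have e2 : 2 * k + 1 - 1 = 2 * k := by omega
    rw [e2, if_pos (even_two_mul k), Nat.mul_div_cancel_left k (by norm_num)]
    rcases Nat.eq_zero_or_pos k with rfl | hk
    · rw [if_neg (by omega : ¬ (3 ≤ 2 * 0 + 1)), if_neg (by omega : ¬ (2 ≤ 2 * 0 + 1)),
        if_pos (by omega : 2 * 0 + 1 = 1), if_neg (by omega : ¬ (2 * 0 + 1 = 0)),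
        pds_odd a b 0]
      have h0 : pds a b 0 = a := by simpa using pds_even a b 0
      rw [h0]
      subst hc1 hc2 hc3
      linear_combination (2*a^2 + 2*a*b + b^2) * h2
    · obtain ⟨j, rfl⟩ : ∃ j, k = j + 1 := ⟨k - 1, by omega⟩
      rw [if_pos (by omega : 3 ≤ 2 * (j + 1) + 1)]
      have e3 : 2 * (j + 1) + 1 - 3 = 2 * j := by omega
      rw [e3, if_pos (even_two_mul j), Nat.mul_div_cancel_left j (by norm_num)]
      rw [if_pos (by omega : 2 ≤ 2 * (j + 1) + 1)]
      have e4 : 2 * (j + 1) + 1 - 2 = 2 * j + 1 := by omega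
      rw [e4, if_neg (by omega : ¬ 2 * (j + 1) + 1 = 1), if_neg (by omega : ¬ 2 * (j + 1) + 1 = 0)]
      rw [pds_odd a b j, pds_odd a b (j + 1)]
      subst hc1 hc2 hc3
      linear_combination (pds_sq a b j) + (pds_sq a b (j + 1)) +
        ((a+b) * (pds a b j + pds a b (j+1)) + a^2 + 3*a*b + b^2) * h2

end PDSAux

section PDSField

variable {K : Type*} [Field K] [CharP K 2]

lemma pds_not_rational (a b : K) (hab : a ≠ b) (r : RatFunc K) :
    (r : LaurentSeries K) ≠ ((PowerSeries.mk (pds a b) : PowerSeries K) : LaurentSeries K) := by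
  intro hr
  have h2c : (2 : K) = 0 := CharTwo.two_eq_zero
  have hab' : a + b ≠ 0 := by
    intro h
    apply hab
    linear_combination h + (-b) * h2c
  have hden : algebraMap (Polynomial K) (RatFunc K) r.denom ≠ 0 :=
    RatFunc.algebraMap_ne_zero (RatFunc.denom_ne_zero r)
  have h1 : r * algebraMap (Polynomial K) (RatFunc K) r.denom
      = algebraMap (Polynomial K) (RatFunc K) r.num := by
    nth_rewrite 1 [← RatFunc.num_div_denom r]
    exact div_mul_cancel₀ _ hden
  have h2 := congrArg (fun x : RatFunc K => (x : LaurentSeries K)) h1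
  simp only [map_mul] at h2
  have h3 : ∀ P : Polynomial K,
      ((algebraMap (Polynomial K) (RatFunc K) P : RatFunc K) : LaurentSeries K)
        = ((P : K⟦X⟧) : LaurentSeries K) := fun P => (RatFunc.coe_coe P).symm
  rw [h3, h3, hr, mul_comm, ← PowerSeries.coe_mul] at h2
  have h4 : ((r.denom : K⟦X⟧) * PowerSeries.mk (pds a b) : K⟦X⟧) = (r.num : K⟦X⟧) :=
    HahnSeries.ofPowerSeries_injective h2
  set q : Polynomial K := r.denom with hqdef
  set d := q.natDegree with hd
  set N := max d (r.num.natDegree + 1) with hN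
  have hrec : ∀ n, N ≤ n →
      ∑ i ∈ Finset.range (d + 1), q.coeff i * pds a b (n - i) = 0 := by
    intro n hn
    have h5 := congrArg (PowerSeries.coeff n) h4
    rw [PowerSeries.coeff_mul, Finset.Nat.sum_antidiagonal_eq_sum_range_succ_mk] at h5
    simp only [Polynomial.coeff_coe, PowerSeries.coeff_mk] at h5
    have hz : r.num.coeff n = 0 :=
      Polynomial.coeff_eq_zero_of_natDegree_lt (by omega)
    rw [hz] at h5
    rw [← h5]
    apply Finset.sum_subset (Finset.range_subset_range.mpr (show d + 1 ≤ n + 1 by omega))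
    intro x hx hx'
    rw [Finset.mem_range] at hx hx'
    rw [Polynomial.coeff_eq_zero_of_natDegree_lt (show q.natDegree < x by omega), zero_mul]
  have hq0 : ∀ i, i ≤ d → q.coeff i = 0 := by
    intro i hi
    set M := 2 ^ (d + 1) with hM
    have hMd : d < M := by
      have := Nat.lt_two_pow_self (n := d + 1)
      omega
    set u := 2 * N + 1 with hu
    have hMu : u ≤ M * u := Nat.le_mul_of_pos_left u (by positivity)
    have hM0 : 0 < M := by positivity
    set n := M * u - 1 + i with hn
    have hNn : N ≤ n := by omega
    have hvMu : padicValNat 2 (M * u) = d + 1 := by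
      rw [hM, padicValNat.mul (by positivity) (by omega), padicValNat.prime_pow,
        padicValNat.eq_zero_of_not_dvd (by omega)]
    have hvMu2 : padicValNat 2 (M * u + M * u) = d + 2 := by
      rw [← two_mul, padicValNat.mul (by norm_num) (by positivity),
        padicValNat.self (by norm_num), hvMu]
      omega
    have hA := hrec n hNn
    have hA' := hrec (n + M * u) (by omega)
    have key : ∀ j ∈ Finset.range (d + 1),
        q.coeff j * pds a b (n - j) + q.coeff j * pds a b (n + M * u - j)
          = if j = i then q.coeff i * (a + b) else 0 := by
      intro j hj
      rw [Finset.mem_range] at hj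
      have hjd : j ≤ d := by omega
      by_cases hji : j = i
      · subst hji
        rw [if_pos rfl]
        have e1 : n - j + 1 = M * u := by omega
        have e2 : n + M * u - j + 1 = M * u + M * u := by omega
        have hvA : padicValNat 2 (n - j + 1) = d + 1 := by rw [e1]; exact hvMu
        have hvB : padicValNat 2 (n + M * u - j + 1) = d + 2 := by rw [e2]; exact hvMu2
        simp only [pds, hvA, hvB]
        rcases Nat.even_or_odd (d + 1) with hE | hE
        · have hE2 : ¬ Even (d + 2) := by rw [Nat.even_iff] at hE ⊢; omega
          rw [if_pos hE, if_neg hE2]; ring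
        · have hE1 : ¬ Even (d + 1) := by rw [Nat.odd_iff] at hE; rw [Nat.even_iff]; omega
          have hE2 : Even (d + 2) := by rw [Nat.odd_iff] at hE; rw [Nat.even_iff]; omega
          rw [if_neg hE1, if_pos hE2]; ring
      · rw [if_neg hji]
        have heq : pds a b (n - j) = pds a b (n + M * u - j) := by
          apply pds_congr
          set e := n - j + 1 with he
          have hej : e + j = M * u + i := by omega
          have he0 : e ≠ 0 := by omega
          obtain ⟨y, hy⟩ : ∃ y, M * u = y := ⟨_, rfl⟩
          have hnd : ¬ 2 ^ (d + 1) ∣ e := by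
            rintro ⟨m, hm⟩
            rcases lt_trichotomy m u with h | h | h
            · have h1 : M * (m + 1) ≤ M * u := Nat.mul_le_mul le_rfl (by omega)
              rw [Nat.mul_succ, hy] at h1
              rw [hy] at hej
              rw [← hM] at hm
              omega
            · subst h
              rw [← hM] at hm
              rw [hy] at hm hej
              omega
            · have h1 : M * (u + 1) ≤ M * m := Nat.mul_le_mul le_rfl (by omega)
              rw [Nat.mul_succ, hy] at h1
              rw [hy] at hej
              rw [← hM] at hm
              omega
          set v := padicValNat 2 e with hv
          have hv1 : 2 ^ v ∣ e := pow_padicValNat_dvd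
          have hv2 : ¬ 2 ^ (v + 1) ∣ e := pow_succ_padicValNat_not_dvd he0
          have hvK : v + 1 ≤ d + 1 := by
            by_contra hcon
            exact hnd (dvd_trans (pow_dvd_pow 2 (by omega)) hv1)
          have hd1 : (2 : ℕ) ^ v ∣ M * u := by
            rw [hM]
            exact Dvd.dvd.mul_right (pow_dvd_pow 2 (by omega)) u
          have hd2 : (2 : ℕ) ^ (v + 1) ∣ M * u := by
            rw [hM]
            exact Dvd.dvd.mul_right (pow_dvd_pow 2 hvK) u
          have hv1' : 2 ^ v ∣ e + M * u := dvd_add hv1 hd1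
          have hv2' : ¬ 2 ^ (v + 1) ∣ e + M * u := by
            intro hcon
            apply hv2
            have := Nat.dvd_sub hcon hd2
            rwa [Nat.add_sub_cancel] at this
          have he0' : e + M * u ≠ 0 := by omega
          have hle : v ≤ padicValNat 2 (e + M * u) :=
            (padicValNat_dvd_iff_le he0').mp hv1'
          have hlt : ¬ (v + 1 ≤ padicValNat 2 (e + M * u)) := by
            intro hcon
            exact hv2' ((padicValNat_dvd_iff_le he0').mpr hcon)
          have hval : padicValNat 2 (e + M * u) = v := by omega
          have e3 : n + M * u - j + 1 = e + M * u := by omega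
          rw [e3, hval]
        rw [heq]
        exact CharTwo.add_self_eq_zero _
    have hsum : (∑ j ∈ Finset.range (d + 1),
        (q.coeff j * pds a b (n - j) + q.coeff j * pds a b (n + M * u - j)))
          = q.coeff i * (a + b) := by
      rw [Finset.sum_congr rfl key,
        Finset.sum_ite_eq' (Finset.range (d + 1)) i (fun _ => q.coeff i * (a + b)),
        if_pos (Finset.mem_range.mpr (by omega))]
    rw [Finset.sum_add_distrib, hA, hA', add_zero] at hsum
    exact (mul_eq_zero.mp hsum.symm).resolve_right hab'
  have hlead := hq0 d le_rfl
  rw [hd] at hlead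
  have hlc : q.leadingCoeff = 0 := hlead
  exact RatFunc.denom_ne_zero r (Polynomial.leadingCoeff_eq_zero.mp hlc)

end PDSField

noncomputable section


/-- The field `F₂(a,b)` of rational functions in two indeterminates over `F₂`. -/
abbrev F2ab : Type := FractionRing (MvPolynomial (Fin 2) (ZMod 2))

open scoped RatFunc

instance : CharP F2ab 2 :=
  charP_of_injective_ringHom
    (IsFractionRing.injective (MvPolynomial (Fin 2) (ZMod 2)) F2ab) 2

set_option maxHeartbeats 1000000 in
set_option synthInstance.maxHeartbeats 400000 in
/-- Over `K = F₂(a,b)`, the power series of the period-doubling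
sequence, `F = Σ s_m z^m` with `s_m = a` if `ν₂(m+1)` is even and `s_m = b`
otherwise, satisfies
`(z³+z)F² + ((a+b)z² + (a+b))F + ((a²+ab+b²)z + a²+ab) = 0`;
in particular `F` is algebraic of degree 2 over `K(z)`. -/
theorem stmt18 (a b : F2ab)
    (ha : a = algebraMap (MvPolynomial (Fin 2) (ZMod 2)) F2ab (MvPolynomial.X 0))
    (hb : b = algebraMap (MvPolynomial (Fin 2) (ZMod 2)) F2ab (MvPolynomial.X 1))
    (F : PowerSeries F2ab)
    (hF : F = PowerSeries.mk fun m =>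
      if Even (padicValNat 2 (m + 1)) then a else b) :
    ((PowerSeries.X ^ 3 + PowerSeries.X) * F ^ 2 +
        (PowerSeries.C (R := F2ab) (a + b) * PowerSeries.X ^ 2 + PowerSeries.C (R := F2ab) (a + b)) * F +
        (PowerSeries.C (R := F2ab) (a ^ 2 + a * b + b ^ 2) * PowerSeries.X +
          PowerSeries.C (R := F2ab) (a ^ 2 + a * b)) = 0) ∧
      ∃ P : Polynomial (RatFunc F2ab), P ≠ 0 ∧ P.natDegree = 2 ∧
        Polynomial.aeval (F : LaurentSeries F2ab) P = 0 ∧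
        ∀ Q : Polynomial (RatFunc F2ab), Q ≠ 0 →
          Polynomial.aeval (F : LaurentSeries F2ab) Q = 0 → 2 ≤ Q.natDegree := by

  have hab : a ≠ b := by
    rw [ha, hb]
    intro h
    have h2 := IsFractionRing.injective (MvPolynomial (Fin 2) (ZMod 2)) F2ab h
    have := MvPolynomial.X_injective h2
    simp at this
  have hFeq : F = PowerSeries.mk (pds a b) := hF
  subst hFeq
  have hkey := key_eq a b
  refine ⟨hkey, ?_⟩
  -- part 2
  set p2 : Polynomial F2ab := Polynomial.X ^ 3 + Polynomial.X with hp2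
  set p1 : Polynomial F2ab :=
    Polynomial.C (a + b) * Polynomial.X ^ 2 + Polynomial.C (a + b) with hp1
  set p0 : Polynomial F2ab :=
    Polynomial.C (a ^ 2 + a * b + b ^ 2) * Polynomial.X + Polynomial.C (a ^ 2 + a * b) with hp0
  have hp2ne : p2 ≠ 0 := by
    intro h
    have h3 : p2.coeff 3 = 1 := by
      rw [hp2]
      simp [Polynomial.coeff_X, Polynomial.coeff_X_pow]
    rw [h] at h3
    simp at h3
  have hr2ne : algebraMap (Polynomial F2ab) (RatFunc F2ab) p2 ≠ 0 :=
    RatFunc.algebraMap_ne_zero hp2ne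
  set P : Polynomial (RatFunc F2ab) :=
    Polynomial.C (algebraMap (Polynomial F2ab) (RatFunc F2ab) p2) * Polynomial.X ^ 2 +
      Polynomial.C (algebraMap (Polynomial F2ab) (RatFunc F2ab) p1) * Polynomial.X +
      Polynomial.C (algebraMap (Polynomial F2ab) (RatFunc F2ab) p0) with hP
  have hPdeg : P.natDegree = 2 := Polynomial.natDegree_quadratic hr2ne
  have hcoe : ∀ Pp : Polynomial F2ab,
      ((algebraMap (Polynomial F2ab) (RatFunc F2ab) Pp : RatFunc F2ab) : LaurentSeries F2ab)
        = ((Pp : F2ab⟦X⟧) : LaurentSeries F2ab) := fun Pp => (RatFunc.coe_coe Pp).symm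
  have hPaeval : Polynomial.aeval
      ((PowerSeries.mk (pds a b) : PowerSeries F2ab) : LaurentSeries F2ab) P = 0 := by
    rw [hP]
    simp only [map_add, map_mul, Polynomial.aeval_C, Polynomial.aeval_X, map_pow]
    have hAM : ∀ x : RatFunc F2ab,
        algebraMap (RatFunc F2ab) (LaurentSeries F2ab) x = (x : LaurentSeries F2ab) := fun _ => rfl
    rw [hAM, hAM, hAM, hcoe, hcoe, hcoe]
    rw [← PowerSeries.coe_pow, ← PowerSeries.coe_mul, ← PowerSeries.coe_mul,
      ← PowerSeries.coe_add, ← PowerSeries.coe_add]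
    have : (p2 : F2ab⟦X⟧) * PowerSeries.mk (pds a b) ^ 2 +
        (p1 : F2ab⟦X⟧) * PowerSeries.mk (pds a b) + (p0 : F2ab⟦X⟧) = 0 := by
      rw [hp2, hp1, hp0]
      push_cast
      exact hkey
    rw [this, PowerSeries.coe_zero]
  refine ⟨P, ?_, hPdeg, hPaeval, ?_⟩
  · intro h
    rw [h] at hPdeg
    simp at hPdeg
  · intro Q hQ0 hQaeval
    by_contra hdeg
    push_neg at hdeg
    have hQ1 : Q.natDegree ≤ 1 := by omega
    have hQeq := Polynomial.eq_X_add_C_of_natDegree_le_one hQ1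
    rw [hQeq] at hQaeval
    simp only [map_add, map_mul, Polynomial.aeval_C, Polynomial.aeval_X] at hQaeval
    have hAM : ∀ x : RatFunc F2ab,
        algebraMap (RatFunc F2ab) (LaurentSeries F2ab) x = (x : LaurentSeries F2ab) := fun _ => rfl
    rw [hAM, hAM] at hQaeval
    by_cases hq1 : Q.coeff 1 = 0
    · rw [hq1] at hQaeval
      rw [map_zero, zero_mul, zero_add] at hQaeval
      have h0 : Q.coeff 0 = 0 := by
        apply (algebraMap (RatFunc F2ab) (LaurentSeries F2ab)).injective
        rw [hQaeval, map_zero]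
      apply hQ0
      rw [hQeq, hq1, h0]
      simp
    · apply pds_not_rational a b hab (-(Q.coeff 0) / Q.coeff 1)
      rw [map_div₀, map_neg]
      have hc1 : ((Q.coeff 1 : RatFunc F2ab) : LaurentSeries F2ab) ≠ 0 := by
        intro h
        apply hq1
        apply (algebraMap (RatFunc F2ab) (LaurentSeries F2ab)).injective
        rw [h, map_zero]
      field_simp
      linear_combination -hQaeval
end
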